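/- Let L, T > 0, let m ≥ 1 and n be real numbers, let S̄ : [0,L] → ℝ be continuous, and let (h,s) be a classical solution of the tear-film system with exponents (m,n) on [0,L]×[0,T]. Suppose λ > 0 satisfies λ ≤ S̄(x) for all x ∈ [0,L] and λ ≤ s(x,0) ≤ sup_{[0,L]} S̄ for all x ∈ [0,L]. Then the fluid mass is uniformly bounded: for every t ∈ [0,T], ∫₀^L h(x,t) dx ≤ (1/λ) ∫₀^L h(x,0) s(x,0) dx. -/

import Mathlib

open Set MeasureTheory intervalIntegral Filter

open Set MeasureTheory

open Topology

/-- A classical solution of the tear-film system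
`h_t = −(hⁿ h_{xxx})_x − hᵐ(S̄ − s)`,
`s_t = s_{xx} + (h_x/h − h^{n−1} h_{xxx}) s_x + s(S̄ − s) h^{m−1}`
on `[0,L] × [0,T]`, with `h > 0`, `h` four times and `s` twice continuously
differentiable in `x`, both continuously differentiable in `t` (all partial
derivatives jointly continuous), subject to the boundary conditions
`h_x = h_{xxx} = s_x = 0` at `x = 0` and `x = L`. -/
structure TearFilmSolution (L T m n : ℝ) (Sbar : ℝ → ℝ) where
  h : ℝ → ℝ → ℝ
  s : ℝ → ℝ → ℝ
  hx : ℝ → ℝ → ℝ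
  hxx : ℝ → ℝ → ℝ
  hxxx : ℝ → ℝ → ℝ
  hxxxx : ℝ → ℝ → ℝ
  ht : ℝ → ℝ → ℝ
  sx : ℝ → ℝ → ℝ
  sxx : ℝ → ℝ → ℝ
  st : ℝ → ℝ → ℝ
  h_pos : ∀ x ∈ Icc 0 L, ∀ t ∈ Icc 0 T, 0 < h x t
  hasDeriv_hx : ∀ t ∈ Icc 0 T, ∀ x ∈ Icc 0 L,
    HasDerivWithinAt (fun x' => h x' t) (hx x t) (Icc 0 L) x
  hasDeriv_hxx : ∀ t ∈ Icc 0 T, ∀ x ∈ Icc 0 L,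
    HasDerivWithinAt (fun x' => hx x' t) (hxx x t) (Icc 0 L) x
  hasDeriv_hxxx : ∀ t ∈ Icc 0 T, ∀ x ∈ Icc 0 L,
    HasDerivWithinAt (fun x' => hxx x' t) (hxxx x t) (Icc 0 L) x
  hasDeriv_hxxxx : ∀ t ∈ Icc 0 T, ∀ x ∈ Icc 0 L,
    HasDerivWithinAt (fun x' => hxxx x' t) (hxxxx x t) (Icc 0 L) x
  hasDeriv_ht : ∀ x ∈ Icc 0 L, ∀ t ∈ Icc 0 T,
    HasDerivWithinAt (fun t' => h x t') (ht x t) (Icc 0 T) t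
  hasDeriv_sx : ∀ t ∈ Icc 0 T, ∀ x ∈ Icc 0 L,
    HasDerivWithinAt (fun x' => s x' t) (sx x t) (Icc 0 L) x
  hasDeriv_sxx : ∀ t ∈ Icc 0 T, ∀ x ∈ Icc 0 L,
    HasDerivWithinAt (fun x' => sx x' t) (sxx x t) (Icc 0 L) x
  hasDeriv_st : ∀ x ∈ Icc 0 L, ∀ t ∈ Icc 0 T,
    HasDerivWithinAt (fun t' => s x t') (st x t) (Icc 0 T) t
  cont_h : ContinuousOn (fun p : ℝ × ℝ => h p.1 p.2) (Icc 0 L ×ˢ Icc 0 T)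
  cont_s : ContinuousOn (fun p : ℝ × ℝ => s p.1 p.2) (Icc 0 L ×ˢ Icc 0 T)
  cont_hx : ContinuousOn (fun p : ℝ × ℝ => hx p.1 p.2) (Icc 0 L ×ˢ Icc 0 T)
  cont_hxx : ContinuousOn (fun p : ℝ × ℝ => hxx p.1 p.2) (Icc 0 L ×ˢ Icc 0 T)
  cont_hxxx : ContinuousOn (fun p : ℝ × ℝ => hxxx p.1 p.2) (Icc 0 L ×ˢ Icc 0 T)
  cont_hxxxx : ContinuousOn (fun p : ℝ × ℝ => hxxxx p.1 p.2) (Icc 0 L ×ˢ Icc 0 T)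
  cont_ht : ContinuousOn (fun p : ℝ × ℝ => ht p.1 p.2) (Icc 0 L ×ˢ Icc 0 T)
  cont_sx : ContinuousOn (fun p : ℝ × ℝ => sx p.1 p.2) (Icc 0 L ×ˢ Icc 0 T)
  cont_sxx : ContinuousOn (fun p : ℝ × ℝ => sxx p.1 p.2) (Icc 0 L ×ˢ Icc 0 T)
  cont_st : ContinuousOn (fun p : ℝ × ℝ => st p.1 p.2) (Icc 0 L ×ˢ Icc 0 T)
  pde_h : ∀ x ∈ Icc 0 L, ∀ t ∈ Icc 0 T,
    ht x t = -(n * h x t ^ (n - 1) * hx x t * hxxx x t + h x t ^ n * hxxxx x t)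
      - h x t ^ m * (Sbar x - s x t)
  pde_s : ∀ x ∈ Icc 0 L, ∀ t ∈ Icc 0 T,
    st x t = sxx x t + (hx x t / h x t - h x t ^ (n - 1) * hxxx x t) * sx x t
      + s x t * (Sbar x - s x t) * h x t ^ (m - 1)
  bc : ∀ t ∈ Icc 0 T,
    hx 0 t = 0 ∧ hx L t = 0 ∧ hxxx 0 t = 0 ∧ hxxx L t = 0 ∧ sx 0 t = 0 ∧ sx L t = 0



/-- At a right-endpoint minimum, the (within) derivative is nonpositive. -/
lemma deriv_nonpos_of_min_right {g : ℝ → ℝ} {d a b : ℝ} (hab : a < b)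
    (hg : HasDerivWithinAt g d (Icc a b) b)
    (hmin : ∀ t ∈ Icc a b, g b ≤ g t) : d ≤ 0 := by
  have h1 : Tendsto (slope g b) (𝓝[Icc a b \ {b}] b) (𝓝 d) :=
    hasDerivWithinAt_iff_tendsto_slope.mp hg
  rw [Icc_sdiff_right] at h1
  have hne : (𝓝[Ico a b] b).NeBot := by
    apply mem_closure_iff_nhdsWithin_neBot.mp
    rw [closure_Ico hab.ne]
    exact ⟨hab.le, le_rfl⟩
  refine le_of_tendsto h1 ?_
  filter_upwards [self_mem_nhdsWithin] with t ht
  have h2 : 0 ≤ g t - g b := sub_nonneg.mpr (hmin t ⟨ht.1, ht.2.le⟩)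
  have h3 : t - b < 0 := sub_neg.mpr ht.2
  rw [slope_def_field]
  exact div_nonpos_of_nonneg_of_nonpos h2 h3.le

example : True := trivial


/-- At a minimum point with vanishing first derivative, the second derivative is nonnegative. -/
lemma second_deriv_nonneg_at_min {f f' : ℝ → ℝ} {f'' a b x₀ : ℝ} (hab : a < b)
    (hx₀ : x₀ ∈ Icc a b)
    (hd1 : ∀ x ∈ Icc a b, HasDerivWithinAt f (f' x) (Icc a b) x)
    (hd2 : HasDerivWithinAt f' f'' (Icc a b) x₀)
    (hmin : ∀ x ∈ Icc a b, f x₀ ≤ f x)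
    (h0 : f' x₀ = 0) : 0 ≤ f'' := by
  by_contra hneg
  push_neg at hneg
  have hT : Tendsto (slope f' x₀) (𝓝[Icc a b \ {x₀}] x₀) (𝓝 f'') :=
    hasDerivWithinAt_iff_tendsto_slope.mp hd2
  rcases lt_or_eq_of_le hx₀.2 with hlt | heq
  · -- x₀ < b : find right interval where f' < 0, so f strictly decreasing, contradiction
    have hsub : Ioc x₀ b ⊆ Icc a b \ {x₀} := fun x hx =>
      ⟨⟨hx₀.1.trans hx.1.le, hx.2⟩, (ne_of_gt hx.1)⟩
    have hT2 : Tendsto (slope f' x₀) (𝓝[Ioc x₀ b] x₀) (𝓝 f'') :=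
      hT.mono_left (nhdsWithin_mono _ hsub)
    have hev : ∀ᶠ x in 𝓝[Ioc x₀ b] x₀, f' x < 0 := by
      filter_upwards [hT2.eventually_lt_const hneg, self_mem_nhdsWithin] with x hs hx
      rw [slope_def_field, h0, sub_zero] at hs
      have hx0 : 0 < x - x₀ := sub_pos.mpr hx.1
      by_contra hge
      push_neg at hge
      exact absurd (div_nonneg hge hx0.le) (not_le.mpr hs)
    rw [eventually_nhdsWithin_iff, Metric.eventually_nhds_iff] at hev
    obtain ⟨ε, hε, hev⟩ := hev
    set b' := min b (x₀ + ε / 2) with hb'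
    have hx₀b' : x₀ < b' := lt_min hlt (by linarith)
    have hb'b : b' ≤ b := min_le_left _ _
    have hb'mem : b' ∈ Icc a b := ⟨hx₀.1.trans hx₀b'.le, hb'b⟩
    have hfneg : ∀ x ∈ Ioc x₀ b', f' x < 0 := by
      intro x hx
      refine hev ?_ ⟨hx.1, hx.2.trans hb'b⟩
      rw [Real.dist_eq, abs_of_pos (sub_pos.mpr hx.1)]
      have : x ≤ x₀ + ε / 2 := hx.2.trans (min_le_right _ _)
      linarith
    have hanti : StrictAntiOn f (Icc x₀ b') := by
      apply strictAntiOn_of_deriv_neg (convex_Icc _ _)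
      · intro x hx
        exact ((hd1 x ⟨hx₀.1.trans hx.1, hx.2.trans hb'b⟩).continuousWithinAt).mono
          (Icc_subset_Icc (hx₀.1) hb'b)
      · intro x hx
        rw [interior_Icc] at hx
        have hxI : x ∈ Icc a b := ⟨hx₀.1.trans hx.1.le, (hx.2.le.trans hb'b)⟩
        have hda : HasDerivAt f (f' x) x :=
          (hd1 x hxI).hasDerivAt (Icc_mem_nhds (lt_of_le_of_lt hx₀.1 hx.1)
            (lt_of_lt_of_le hx.2 hb'b))
        rw [hda.deriv]
        exact hfneg x ⟨hx.1, hx.2.le⟩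
    have : f b' < f x₀ := hanti (left_mem_Icc.mpr hx₀b'.le) (right_mem_Icc.mpr hx₀b'.le) hx₀b'
    exact absurd (hmin b' hb'mem) (not_le.mpr this)
  · -- x₀ = b : mirror on the left
    have hax₀ : a < x₀ := heq ▸ hab
    have hsub : Ico a x₀ ⊆ Icc a b \ {x₀} := fun x hx =>
      ⟨⟨hx.1, (hx.2.le.trans hx₀.2)⟩, (ne_of_lt hx.2)⟩
    have hT2 : Tendsto (slope f' x₀) (𝓝[Ico a x₀] x₀) (𝓝 f'') :=
      hT.mono_left (nhdsWithin_mono _ hsub)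
    have hne : (𝓝[Ico a x₀] x₀).NeBot := by
      apply mem_closure_iff_nhdsWithin_neBot.mp
      rw [closure_Ico hax₀.ne]
      exact ⟨hax₀.le, le_rfl⟩
    have hev : ∀ᶠ x in 𝓝[Ico a x₀] x₀, 0 < f' x := by
      filter_upwards [hT2.eventually_lt_const hneg, self_mem_nhdsWithin] with x hs hx
      rw [slope_def_field, h0, sub_zero] at hs
      have hx0 : x - x₀ < 0 := sub_neg.mpr hx.2
      by_contra hge
      push_neg at hge
      exact absurd (div_nonneg_of_nonpos hge hx0.le) (not_le.mpr hs)
    rw [eventually_nhdsWithin_iff, Metric.eventually_nhds_iff] at hev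
    obtain ⟨ε, hε, hev⟩ := hev
    set c := max a (x₀ - ε / 2) with hc
    have hcx₀ : c < x₀ := max_lt hax₀ (by linarith)
    have hac : a ≤ c := le_max_left _ _
    have hcmem : c ∈ Icc a b := ⟨hac, hcx₀.le.trans hx₀.2⟩
    have hfpos : ∀ x ∈ Ico c x₀, 0 < f' x := by
      intro x hx
      refine hev ?_ ⟨hac.trans hx.1, hx.2⟩
      rw [Real.dist_eq, abs_of_neg (sub_neg.mpr hx.2)]
      have : x₀ - ε / 2 ≤ x := (le_max_right _ _).trans hx.1
      linarith
    have hmono : StrictMonoOn f (Icc c x₀) := by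
      apply strictMonoOn_of_deriv_pos (convex_Icc _ _)
      · intro x hx
        exact ((hd1 x ⟨hac.trans hx.1, hx.2.trans hx₀.2⟩).continuousWithinAt).mono
          (Icc_subset_Icc hac hx₀.2)
      · intro x hx
        rw [interior_Icc] at hx
        have hxI : x ∈ Icc a b := ⟨hac.trans hx.1.le, hx.2.le.trans hx₀.2⟩
        have hda : HasDerivAt f (f' x) x :=
          (hd1 x hxI).hasDerivAt (Icc_mem_nhds (lt_of_le_of_lt hac hx.1)
            (lt_of_lt_of_le hx.2 (heq ▸ le_rfl)))
        rw [hda.deriv]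
        exact hfpos x ⟨hx.1.le, hx.2⟩
    have : f c < f x₀ := hmono (left_mem_Icc.mpr hcx₀.le) (right_mem_Icc.mpr hcx₀.le) hcx₀
    exact absurd (hmin c hcmem) (not_le.mpr this)


private lemma s_lower_bound (L T m n : ℝ) (hL : 0 < L) (hT : 0 < T)
    (Sbar : ℝ → ℝ) (sol : TearFilmSolution L T m n Sbar)
    (lam : ℝ) (hlam : 0 < lam)
    (hlamS : ∀ x ∈ Icc (0:ℝ) L, lam ≤ Sbar x)
    (hs0 : ∀ x ∈ Icc (0:ℝ) L, lam ≤ sol.s x 0) :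
    ∀ t ∈ Icc (0:ℝ) T, ∀ x ∈ Icc (0:ℝ) L, lam ≤ sol.s x t := by
  -- main claim for each ε ∈ (0, lam)
  have main : ∀ ε, 0 < ε → ε < lam → ∀ t ∈ Icc (0:ℝ) T, ∀ x ∈ Icc (0:ℝ) L,
      lam - ε < sol.s x t := by
    intro ε hε hεlam
    by_contra hbad
    push_neg at hbad
    obtain ⟨t₁, ht₁, x₁, hx₁, hs₁⟩ := hbad
    set K : Set (ℝ × ℝ) := (Icc 0 L ×ˢ Icc 0 T) ∩ {p : ℝ × ℝ | sol.s p.1 p.2 ≤ lam - ε} with hK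
    have hKclosed : IsClosed K :=
      sol.cont_s.preimage_isClosed_of_isClosed (isClosed_Icc.prod isClosed_Icc) isClosed_Iic
    have hKcompact : IsCompact K :=
      (isCompact_Icc.prod isCompact_Icc).of_isClosed_subset hKclosed inter_subset_left
    set B : Set ℝ := Prod.snd '' K with hB
    have hBcompact : IsCompact B := hKcompact.image continuous_snd
    have hBne : B.Nonempty := ⟨t₁, ⟨(x₁, t₁), ⟨⟨hx₁, ht₁⟩, hs₁⟩, rfl⟩⟩
    set t₀ := sInf B with ht₀
    have ht₀B : t₀ ∈ B := hBcompact.sInf_mem hBne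
    obtain ⟨⟨x₀, tt⟩, ⟨⟨hx₀L, ht₀T⟩, hsx₀⟩, htt⟩ := ht₀B
    simp only at htt
    subst htt
    dsimp only at hx₀L ht₀T
    simp only [mem_setOf_eq] at hsx₀
    have hbdd : BddBelow B := ⟨0, fun b hb => by
      obtain ⟨p, ⟨⟨_, hpT⟩, _⟩, hp2⟩ := hb; exact hp2 ▸ hpT.1⟩
    have ht₀pos : 0 < t₀ := by
      rcases lt_or_eq_of_le ht₀T.1 with h | h
      · exact h
      · exfalso
        have := hs0 x₀ hx₀L
        rw [← h] at hsx₀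
        linarith
    -- before t₀ everything is above lam - ε
    have hbefore : ∀ τ ∈ Ico (0:ℝ) t₀, ∀ x ∈ Icc (0:ℝ) L, lam - ε < sol.s x τ := by
      intro τ hτ x hx
      by_contra hle
      push_neg at hle
      have hτB : τ ∈ B := ⟨(x, τ), ⟨⟨hx, ⟨hτ.1, hτ.2.le.trans ht₀T.2⟩⟩, hle⟩, rfl⟩
      exact absurd (csInf_le hbdd hτB) (not_le.mpr hτ.2)
    -- at t₀ everything is ≥ lam - ε
    have hfloor : ∀ x ∈ Icc (0:ℝ) L, lam - ε ≤ sol.s x t₀ := by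
      intro x hx
      have hcont : ContinuousWithinAt (fun τ => sol.s x τ) (Icc 0 T) t₀ :=
        (sol.hasDeriv_st x hx t₀ ht₀T).continuousWithinAt
      have hT2 : Tendsto (fun τ => sol.s x τ) (𝓝[Ico 0 t₀] t₀) (𝓝 (sol.s x t₀)) :=
        hcont.tendsto.mono_left (nhdsWithin_mono _ (fun τ hτ => ⟨hτ.1, hτ.2.le.trans ht₀T.2⟩))
      haveI hne : (𝓝[Ico (0:ℝ) t₀] t₀).NeBot := by
        apply mem_closure_iff_nhdsWithin_neBot.mp
        rw [closure_Ico ht₀pos.ne]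
        exact ⟨ht₀pos.le, le_rfl⟩
      refine ge_of_tendsto hT2 ?_
      filter_upwards [self_mem_nhdsWithin] with τ hτ
      exact (hbefore τ hτ x hx).le
    have hval : sol.s x₀ t₀ = lam - ε := le_antisymm hsx₀ (hfloor x₀ hx₀L)
    have hminx : ∀ x ∈ Icc (0:ℝ) L, sol.s x₀ t₀ ≤ sol.s x t₀ := by
      intro x hx; rw [hval]; exact hfloor x hx
    -- first derivative in x vanishes
    have hsx0 : sol.sx x₀ t₀ = 0 := by
      rcases eq_or_lt_of_le hx₀L.1 with h0 | h0
      · rw [← h0]; exact (sol.bc t₀ ht₀T).2.2.2.2.1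
      · rcases eq_or_lt_of_le hx₀L.2 with hLe | hLe
        · rw [hLe]; exact (sol.bc t₀ ht₀T).2.2.2.2.2
        · have hmem : Icc (0:ℝ) L ∈ 𝓝 x₀ := Icc_mem_nhds h0 hLe
          have hda : HasDerivAt (fun x => sol.s x t₀) (sol.sx x₀ t₀) x₀ :=
            (sol.hasDeriv_sx t₀ ht₀T x₀ hx₀L).hasDerivAt hmem
          have hloc : IsLocalMin (fun x => sol.s x t₀) x₀ := by
            filter_upwards [hmem] with x hx
            exact hminx x hx
          exact hloc.hasDerivAt_eq_zero hda
    -- second derivative in x is nonnegative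
    have hsxx0 : 0 ≤ sol.sxx x₀ t₀ :=
      second_deriv_nonneg_at_min hL hx₀L (sol.hasDeriv_sx t₀ ht₀T)
        (sol.hasDeriv_sxx t₀ ht₀T x₀ hx₀L) hminx hsx0
    -- time derivative is nonpositive
    have hst0 : sol.st x₀ t₀ ≤ 0 := by
      refine deriv_nonpos_of_min_right ht₀pos
        ((sol.hasDeriv_st x₀ hx₀L t₀ ht₀T).mono (Icc_subset_Icc le_rfl ht₀T.2)) ?_
      intro τ hτ
      rcases eq_or_lt_of_le hτ.2 with h | h
      · rw [h]
      · rw [hval]; exact (hbefore τ ⟨hτ.1, h⟩ x₀ hx₀L).le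
    -- contradiction with the PDE
    have hpde := sol.pde_s x₀ hx₀L t₀ ht₀T
    rw [hsx0, mul_zero, add_zero, hval] at hpde
    have hpos : 0 < (lam - ε) * (Sbar x₀ - (lam - ε)) * sol.h x₀ t₀ ^ (m - 1) := by
      apply mul_pos (mul_pos (by linarith) _) _
      · have := hlamS x₀ hx₀L; linarith
      · exact Real.rpow_pos_of_pos (sol.h_pos x₀ hx₀L t₀ ht₀T) _
    linarith
  intro t ht x hx
  by_contra hlt
  push_neg at hlt
  have hε : 0 < min ((lam - sol.s x t) / 2) (lam / 2) := by
    apply lt_min <;> linarith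
  have hεlam : min ((lam - sol.s x t) / 2) (lam / 2) < lam :=
    lt_of_le_of_lt (min_le_right _ _) (by linarith)
  have := main _ hε hεlam t ht x hx
  have h2 : min ((lam - sol.s x t) / 2) (lam / 2) ≤ (lam - sol.s x t) / 2 := min_le_left _ _
  linarith

private lemma mass_conserved (L T m n : ℝ) (hL : 0 < L) (hT : 0 < T)
    (Sbar : ℝ → ℝ) (sol : TearFilmSolution L T m n Sbar) :
    ∀ t ∈ Icc (0:ℝ) T, (∫ x in (0:ℝ)..L, sol.h x t * sol.s x t)
      = ∫ x in (0:ℝ)..L, sol.h x 0 * sol.s x 0 := by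
  -- time derivative of the product
  set Pt : ℝ → ℝ → ℝ := fun x t => sol.ht x t * sol.s x t + sol.h x t * sol.st x t with hPt
  -- continuity helper: slice in x at fixed t
  have compx : ∀ {f : ℝ → ℝ → ℝ}, ∀ t ∈ Icc (0:ℝ) T,
      ContinuousOn (fun p : ℝ × ℝ => f p.1 p.2) (Icc 0 L ×ˢ Icc 0 T) →
      ContinuousOn (fun x => f x t) (Icc (0:ℝ) L) := by
    intro f t ht hf
    exact hf.comp ((continuous_id.prodMk continuous_const).continuousOn)
      (fun x hx => ⟨hx, ht⟩)
  -- Part 1: for each t, the spatial integral of Pt vanishes (integration by parts via FTC)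
  have part1 : ∀ t ∈ Icc (0:ℝ) T, (∫ x in (0:ℝ)..L, Pt x t) = 0 := by
    intro t ht
    set G : ℝ → ℝ := fun x =>
      -(sol.h x t ^ n * sol.hxxx x t) * sol.s x t + sol.h x t * sol.sx x t with hG
    -- derivative of G in x is Pt
    have hGderiv : ∀ x ∈ Icc (0:ℝ) L, HasDerivWithinAt G (Pt x t) (Icc 0 L) x := by
      intro x hx
      have hhpos := sol.h_pos x hx t ht
      have hhne : sol.h x t ≠ 0 := hhpos.ne'
      have d1 : HasDerivWithinAt (fun x' => sol.h x' t ^ n)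
          (n * sol.h x t ^ (n - 1) * sol.hx x t) (Icc 0 L) x := by
        have hr : HasDerivAt (fun y : ℝ => y ^ n) (n * sol.h x t ^ (n - 1)) (sol.h x t) :=
          Real.hasDerivAt_rpow_const (Or.inl hhne)
        exact hr.comp_hasDerivWithinAt x (sol.hasDeriv_hx t ht x hx)
      have d2 : HasDerivWithinAt (fun x' => sol.h x' t ^ n * sol.hxxx x' t)
          (n * sol.h x t ^ (n - 1) * sol.hx x t * sol.hxxx x t
            + sol.h x t ^ n * sol.hxxxx x t) (Icc 0 L) x :=
        d1.mul (sol.hasDeriv_hxxxx t ht x hx)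
      have d3 : HasDerivWithinAt (fun x' => -(sol.h x' t ^ n * sol.hxxx x' t) * sol.s x' t)
          (-(n * sol.h x t ^ (n - 1) * sol.hx x t * sol.hxxx x t
              + sol.h x t ^ n * sol.hxxxx x t) * sol.s x t
            + -(sol.h x t ^ n * sol.hxxx x t) * sol.sx x t) (Icc 0 L) x :=
        d2.neg.mul (sol.hasDeriv_sx t ht x hx)
      have d4 : HasDerivWithinAt (fun x' => sol.h x' t * sol.sx x' t)
          (sol.hx x t * sol.sx x t + sol.h x t * sol.sxx x t) (Icc 0 L) x :=
        (sol.hasDeriv_hx t ht x hx).mul (sol.hasDeriv_sxx t ht x hx)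
      have dtotal := d3.add d4
      refine dtotal.congr_deriv ?_
      symm
      -- algebraic identity using both PDEs
      rw [hPt]
      simp only
      rw [sol.pde_h x hx t ht, sol.pde_s x hx t ht]
      have e1 : sol.h x t ^ n = sol.h x t ^ (n - 1) * sol.h x t := by
        rw [← Real.rpow_add_one hhne (n - 1), sub_add_cancel]
      have e2 : sol.h x t ^ m = sol.h x t ^ (m - 1) * sol.h x t := by
        rw [← Real.rpow_add_one hhne (m - 1), sub_add_cancel]
      rw [e1, e2]
      field_simp
      ring
    -- continuity of G on [0, L]
    have hGcont : ContinuousOn G (Icc (0:ℝ) L) :=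
      ((((compx t ht sol.cont_h).rpow_const
            (fun x hx => Or.inl (sol.h_pos x hx t ht).ne')).mul
          (compx t ht sol.cont_hxxx)).neg.mul (compx t ht sol.cont_s)).add
        ((compx t ht sol.cont_h).mul (compx t ht sol.cont_sx))
    -- integrability of Pt in x
    have hPtcont : ContinuousOn (fun x => Pt x t) (Icc (0:ℝ) L) :=
      ((compx t ht sol.cont_ht).mul (compx t ht sol.cont_s)).add
        ((compx t ht sol.cont_h).mul (compx t ht sol.cont_st))
    have hint : IntervalIntegrable (fun x => Pt x t) volume 0 L :=
      hPtcont.intervalIntegrable_of_Icc hL.le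
    have hftc : (∫ x in (0:ℝ)..L, Pt x t) = G L - G 0 := by
      apply intervalIntegral.integral_eq_sub_of_hasDeriv_right_of_le hL.le hGcont _ hint
      intro x hx
      have hxI : x ∈ Icc (0:ℝ) L := ⟨hx.1.le, hx.2.le⟩
      exact ((hGderiv x hxI).hasDerivAt (Icc_mem_nhds hx.1 hx.2)).hasDerivWithinAt
    rw [hftc, hG]
    obtain ⟨h1, h2, h3, h4, h5, h6⟩ := sol.bc t ht
    simp [h2, h3, h4, h5, h6]
  -- Part 2: FTC in time for the product, pointwise in x
  have hPprod : ∀ x ∈ Icc (0:ℝ) L, ∀ τ ∈ Icc (0:ℝ) T,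
      HasDerivWithinAt (fun τ' => sol.h x τ' * sol.s x τ') (Pt x τ) (Icc 0 T) τ :=
    fun x hx τ hτ => (sol.hasDeriv_ht x hx τ hτ).mul (sol.hasDeriv_st x hx τ hτ)
  have part2 : ∀ x ∈ Icc (0:ℝ) L, ∀ t ∈ Icc (0:ℝ) T,
      sol.h x t * sol.s x t - sol.h x 0 * sol.s x 0 = ∫ τ in (0:ℝ)..t, Pt x τ := by
    intro x hx t ht
    have compt : ∀ {f : ℝ → ℝ → ℝ},
        ContinuousOn (fun p : ℝ × ℝ => f p.1 p.2) (Icc 0 L ×ˢ Icc 0 T) →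
        ContinuousOn (fun τ => f x τ) (Icc (0:ℝ) T) := by
      intro f hf
      exact hf.comp ((continuous_const.prodMk continuous_id).continuousOn)
        (fun τ hτ => ⟨hx, hτ⟩)
    have hcont : ContinuousOn (fun τ => sol.h x τ * sol.s x τ) (Icc (0:ℝ) t) :=
      (((compt sol.cont_h).mul (compt sol.cont_s))).mono
        (Icc_subset_Icc le_rfl ht.2)
    have hPtc : ContinuousOn (fun τ => Pt x τ) (Icc (0:ℝ) t) :=
      (((compt sol.cont_ht).mul (compt sol.cont_s)).add
        ((compt sol.cont_h).mul (compt sol.cont_st))).mono (Icc_subset_Icc le_rfl ht.2)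
    have hint : IntervalIntegrable (fun τ => Pt x τ) volume 0 t :=
      hPtc.intervalIntegrable_of_Icc ht.1
    have := intervalIntegral.integral_eq_sub_of_hasDeriv_right_of_le ht.1 hcont
      (fun τ hτ => (((hPprod x hx τ ⟨hτ.1.le, hτ.2.le.trans ht.2⟩).hasDerivAt
        (Icc_mem_nhds hτ.1 (lt_of_lt_of_le hτ.2 ht.2)))).hasDerivWithinAt) hint
    rw [this]
  -- Part 3: combine via Fubini
  intro t ht
  have hPt2cont : ContinuousOn (fun p : ℝ × ℝ => Pt p.1 p.2) (Icc 0 L ×ˢ Icc 0 T) :=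
    (sol.cont_ht.mul sol.cont_s).add (sol.cont_h.mul sol.cont_st)
  have hi1 : IntervalIntegrable (fun x => sol.h x t * sol.s x t) volume 0 L :=
    ((compx t ht sol.cont_h).mul (compx t ht sol.cont_s)).intervalIntegrable_of_Icc hL.le
  have h0T : (0:ℝ) ∈ Icc (0:ℝ) T := ⟨le_rfl, hT.le⟩
  have hi2 : IntervalIntegrable (fun x => sol.h x 0 * sol.s x 0) volume 0 L :=
    ((compx 0 h0T sol.cont_h).mul (compx 0 h0T sol.cont_s)).intervalIntegrable_of_Icc hL.le
  have key : (∫ x in (0:ℝ)..L, sol.h x t * sol.s x t)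
      - (∫ x in (0:ℝ)..L, sol.h x 0 * sol.s x 0) = 0 := by
    rw [← intervalIntegral.integral_sub hi1 hi2]
    have step1 : (∫ x in (0:ℝ)..L, (sol.h x t * sol.s x t - sol.h x 0 * sol.s x 0))
        = ∫ x in (0:ℝ)..L, (∫ τ in (0:ℝ)..t, Pt x τ) := by
      apply intervalIntegral.integral_congr
      intro x hx
      rw [uIcc_of_le hL.le] at hx
      exact part2 x hx t ht
    rw [step1]
    -- convert to set integrals and swap
    have hswap : (∫ x in Ioc (0:ℝ) L, (∫ τ in Ioc (0:ℝ) t, Pt x τ))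
        = ∫ τ in Ioc (0:ℝ) t, (∫ x in Ioc (0:ℝ) L, Pt x τ) := by
      apply MeasureTheory.integral_integral_swap
      rw [MeasureTheory.Measure.prod_restrict]
      apply MeasureTheory.IntegrableOn.mono_set
        (hPt2cont.integrableOn_compact (isCompact_Icc.prod isCompact_Icc))
      exact Set.prod_mono Ioc_subset_Icc_self
        (fun τ hτ => ⟨hτ.1.le, hτ.2.trans ht.2⟩)
    have conv1 : (∫ x in (0:ℝ)..L, (∫ τ in (0:ℝ)..t, Pt x τ))
        = ∫ x in Ioc (0:ℝ) L, (∫ τ in Ioc (0:ℝ) t, Pt x τ) := by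
      rw [intervalIntegral.integral_of_le hL.le]
      apply MeasureTheory.setIntegral_congr_fun measurableSet_Ioc
      intro x _
      show (∫ τ in (0:ℝ)..t, Pt x τ) = ∫ τ in Ioc (0:ℝ) t, Pt x τ
      rw [intervalIntegral.integral_of_le ht.1]
    rw [conv1, hswap]
    have hzero : ∀ τ ∈ Ioc (0:ℝ) t, (∫ x in Ioc (0:ℝ) L, Pt x τ) = 0 := by
      intro τ hτ
      rw [← intervalIntegral.integral_of_le hL.le]
      exact part1 τ ⟨hτ.1.le, hτ.2.trans ht.2⟩
    rw [MeasureTheory.setIntegral_congr_fun measurableSet_Ioc hzero]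
    simp
  linarith [key]

/-- Uniform bound for the fluid mass: `∫₀^L h(x,t) dx ≤ (1/λ) ∫₀^L h₀ s₀ dx`. -/
theorem fluid_mass_bound
    (L T m n : ℝ) (hL : 0 < L) (hT : 0 < T) (hm : 1 ≤ m)
    (Sbar : ℝ → ℝ) (hScont : ContinuousOn Sbar (Icc (0:ℝ) L))
    (sol : TearFilmSolution L T m n Sbar)
    (lam : ℝ) (hlam : 0 < lam)
    (hlamS : ∀ x ∈ Icc (0:ℝ) L, lam ≤ Sbar x)
    (hs0 : ∀ x ∈ Icc (0:ℝ) L,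
      lam ≤ sol.s x 0 ∧ sol.s x 0 ≤ sSup (Sbar '' Icc (0:ℝ) L)) :
    ∀ t ∈ Icc (0:ℝ) T,
      (∫ x in (0:ℝ)..L, sol.h x t)
        ≤ (1 / lam) * ∫ x in (0:ℝ)..L, sol.h x 0 * sol.s x 0 := by
  intro t ht
  have hsl := s_lower_bound L T m n hL hT Sbar sol lam hlam hlamS
    (fun x hx => (hs0 x hx).1) t ht
  have hcons := mass_conserved L T m n hL hT Sbar sol t ht
  have compx : ∀ {f : ℝ → ℝ → ℝ}, ∀ t' ∈ Icc (0:ℝ) T,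
      ContinuousOn (fun p : ℝ × ℝ => f p.1 p.2) (Icc 0 L ×ˢ Icc 0 T) →
      ContinuousOn (fun x => f x t') (Icc (0:ℝ) L) := by
    intro f t' ht' hf
    exact hf.comp ((continuous_id.prodMk continuous_const).continuousOn)
      (fun x hx => ⟨hx, ht'⟩)
  have hi1 : IntervalIntegrable (fun x => lam * sol.h x t) volume 0 L :=
    (continuousOn_const.mul (compx t ht sol.cont_h)).intervalIntegrable_of_Icc hL.le
  have hi2 : IntervalIntegrable (fun x => sol.h x t * sol.s x t) volume 0 L :=
    ((compx t ht sol.cont_h).mul (compx t ht sol.cont_s)).intervalIntegrable_of_Icc hL.le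
  have hmono : (∫ x in (0:ℝ)..L, lam * sol.h x t)
      ≤ ∫ x in (0:ℝ)..L, sol.h x t * sol.s x t := by
    apply intervalIntegral.integral_mono_on hL.le hi1 hi2
    intro x hx
    have hh := sol.h_pos x hx t ht
    have hs := hsl x hx
    calc lam * sol.h x t = sol.h x t * lam := mul_comm _ _
      _ ≤ sol.h x t * sol.s x t := mul_le_mul_of_nonneg_left hs hh.le
  rw [intervalIntegral.integral_const_mul, hcons] at hmono
  rw [one_div, ← div_eq_inv_mul, le_div_iff₀ hlam, mul_comm]
  exact hmono
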